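/- Let H be an N×N complex Hermitian matrix with H² = H, let |ψ0⟩ ∈ ℂ^N be a unit vector, ψ0 = |ψ0⟩⟨ψ0|, X0 := [H, ψ0], Y0 := i[H, X0]. Fix x, y ∈ ℝ. Then for every unitary U, the curve γ(t) := e^{i(ty/2)ψ0} e^{i(π/2)H} e^{−i(tx/2)ψ0} e^{−iπH} e^{i(tx/2)ψ0} e^{−i(π/2)H} e^{−i(ty/2)ψ0} e^{iπH} U (t ≥ 0) satisfies γ(0) = U, and γ is differentiable at t = 0 with γ′(0) = (x X0 + y Y0) U. (This is the 8-factor Grover-compatible retraction.) -/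

import Mathlib

open Matrix

attribute [local instance] Matrix.frobeniusNormedAddCommGroup Matrix.frobeniusNormedSpace

/-- The rank-one projector `|ψ⟩⟨ψ|` associated with a vector `ψ`. -/
noncomputable def rankOneProj {N : ℕ} (ψ : Fin N → ℂ) : Matrix (Fin N) (Fin N) ℂ :=
  Matrix.vecMulVec ψ (star ψ)

/-- The gate `e^{iθM}` for a matrix `M` and a real angle `θ`. -/
noncomputable def expGate {N : ℕ} (M : Matrix (Fin N) (Fin N) ℂ) (θ : ℝ) :
    Matrix (Fin N) (Fin N) ℂ :=
  NormedSpace.exp ((Complex.I * (θ : ℂ)) • M)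

attribute [local instance] Matrix.frobeniusNormedRing Matrix.frobeniusNormedAlgebra

private lemma scalar_exp_tail (c : ℂ) :
    ∑' n : ℕ, ((Nat.factorial (n+1) : ℂ))⁻¹ * c^(n+1) = Complex.exp c - 1 := by
  have hs : Summable (fun n : ℕ => ((Nat.factorial n : ℂ))⁻¹ • c ^ n) :=
    NormedSpace.expSeries_summable' (𝕂 := ℂ) c
  have hexp : Complex.exp c = ∑' n : ℕ, ((Nat.factorial n : ℂ))⁻¹ • c ^ n := by
    rw [Complex.exp_eq_exp_ℂ, NormedSpace.exp_eq_tsum ℂ]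
  rw [hexp, Summable.tsum_eq_zero_add hs]
  simp [smul_eq_mul]

private lemma exp_idem {N : ℕ} (P : Matrix (Fin N) (Fin N) ℂ) (hP : P * P = P) (c : ℂ) :
    NormedSpace.exp (c • P) = 1 + (Complex.exp c - 1) • P := by
  have hpow : ∀ n : ℕ, P ^ (n + 1) = P := by
    intro n; induction n with
    | zero => simp
    | succ k ih => rw [pow_succ, ih, hP]
  have hs : Summable (fun n : ℕ => ((Nat.factorial n : ℂ))⁻¹ • (c • P) ^ n) :=
    NormedSpace.expSeries_summable' (𝕂 := ℂ) (c • P)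
  have hss : Summable (fun n : ℕ => ((Nat.factorial (n+1) : ℂ))⁻¹ * c^(n+1)) := by
    have h2 : Summable (fun n : ℕ => ((Nat.factorial n : ℂ))⁻¹ • c ^ n) :=
      NormedSpace.expSeries_summable' (𝕂 := ℂ) c
    simpa [smul_eq_mul] using (summable_nat_add_iff 1).mpr h2
  rw [NormedSpace.exp_eq_tsum ℂ]
  beta_reduce
  rw [Summable.tsum_eq_zero_add hs]
  have : ∀ n : ℕ, ((Nat.factorial (n+1) : ℂ))⁻¹ • (c • P) ^ (n+1)
      = (((Nat.factorial (n+1) : ℂ))⁻¹ * c^(n+1)) • P := by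
    intro n
    rw [smul_pow, hpow, smul_smul]
  simp only [this]
  rw [Summable.tsum_smul_const hss, scalar_exp_tail]
  simp

private lemma expGate_add {N : ℕ} (M : Matrix (Fin N) (Fin N) ℂ) (θ₁ θ₂ : ℝ) :
    expGate M θ₁ * expGate M θ₂ = expGate M (θ₁ + θ₂) := by
  unfold expGate
  rw [← Matrix.exp_add_of_commute _ _ (((Commute.refl M).smul_left _).smul_right _)]
  congr 1
  rw [← add_smul]
  congr 1
  push_cast
  ring

private lemma expGate_zero {N : ℕ} (M : Matrix (Fin N) (Fin N) ℂ) :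
    expGate M 0 = 1 := by
  simp [expGate, NormedSpace.exp_zero]

private lemma EE {N : ℕ} {H : Matrix (Fin N) (Fin N) ℂ} (hH : H * H = H) (a b : ℂ) :
    ((1 : Matrix (Fin N) (Fin N) ℂ) + a • H) * (1 + b • H)
      = 1 + (a + b + a * b) • H := by
  simp only [mul_add, add_mul, one_mul, mul_one, smul_mul_assoc, mul_smul_comm, smul_smul, hH]
  module

private lemma sandwich {N : ℕ} (H P : Matrix (Fin N) (Fin N) ℂ) (a b : ℂ) :
    ((1 : Matrix (Fin N) (Fin N) ℂ) + a • H) * P * (1 + b • H)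
      = P + a • (H * P) + b • (P * H) + (a * b) • (H * P * H) := by
  simp only [mul_add, add_mul, one_mul, mul_one, smul_mul_assoc, mul_smul_comm, smul_smul]
  module

theorem stmt_10 {N : ℕ} (H : Matrix (Fin N) (Fin N) ℂ)
    (hHerm : H.IsHermitian) (hProj : H * H = H)
    (ψ₀ : Fin N → ℂ) (hψ₀ : star ψ₀ ⬝ᵥ ψ₀ = 1)
    (X₀ Y₀ : Matrix (Fin N) (Fin N) ℂ)
    (hX₀ : X₀ = H * rankOneProj ψ₀ - rankOneProj ψ₀ * H)
    (hY₀ : Y₀ = Complex.I • (H * X₀ - X₀ * H))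
    (x y : ℝ)
    (U : Matrix (Fin N) (Fin N) ℂ) (hU : U ∈ Matrix.unitaryGroup (Fin N) ℂ)
    (γ : ℝ → Matrix (Fin N) (Fin N) ℂ)
    (hγ : γ = fun t =>
      expGate (rankOneProj ψ₀) (t * y / 2) * expGate H (Real.pi / 2) *
        expGate (rankOneProj ψ₀) (-(t * x / 2)) * expGate H (-Real.pi) *
        expGate (rankOneProj ψ₀) (t * x / 2) * expGate H (-(Real.pi / 2)) *
        expGate (rankOneProj ψ₀) (-(t * y / 2)) * expGate H Real.pi * U) :
    γ 0 = U ∧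
    HasDerivWithinAt γ (((x : ℂ) • X₀ + (y : ℂ) • Y₀) * U) (Set.Ici (0 : ℝ)) 0 := by
  set P : Matrix (Fin N) (Fin N) ℂ := rankOneProj ψ₀ with hPdef
  have hPP : P * P = P := by
    ext i j
    simp only [hPdef, rankOneProj, Matrix.mul_apply, Matrix.vecMulVec_apply, Pi.star_apply]
    have h1 : ∑ k, star ψ₀ k * ψ₀ k = 1 := by
      simpa [dotProduct] using hψ₀
    calc ∑ k, ψ₀ i * star (ψ₀ k) * (ψ₀ k * star (ψ₀ j))
        = (ψ₀ i * star (ψ₀ j)) * ∑ k, star ψ₀ k * ψ₀ k := by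
          rw [Finset.mul_sum]; congr 1; ext k; simp; ring
      _ = ψ₀ i * star (ψ₀ j) := by rw [h1, mul_one]
  -- explicit formula for the P-gates
  have hG : ∀ θ : ℝ, expGate P θ
      = 1 + (Complex.exp (Complex.I * (θ : ℂ)) - 1) • P := by
    intro θ; rw [expGate, exp_idem P hPP]
  -- explicit formula for the H-gates
  have hE : ∀ θ : ℝ, expGate H θ
      = 1 + (Complex.exp (Complex.I * (θ : ℂ)) - 1) • H := by
    intro θ; rw [expGate, exp_idem H hProj]
  -- values of the four constant gates
  have hc1 : Complex.exp (Complex.I * ((Real.pi / 2 : ℝ) : ℂ)) = Complex.I := by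
    rw [mul_comm, Complex.exp_mul_I]; push_cast
    simp [← Complex.ofReal_cos, ← Complex.ofReal_sin]
  have hc2 : Complex.exp (Complex.I * ((-Real.pi : ℝ) : ℂ)) = -1 := by
    rw [mul_comm, Complex.exp_mul_I]; push_cast; simp
  have hc3 : Complex.exp (Complex.I * ((-(Real.pi / 2) : ℝ) : ℂ)) = -Complex.I := by
    rw [mul_comm, Complex.exp_mul_I]; push_cast; simp
  have hc4 : Complex.exp (Complex.I * ((Real.pi : ℝ) : ℂ)) = -1 := by
    rw [mul_comm, Complex.exp_mul_I]; simp
  have hC1 : expGate H (Real.pi / 2) = 1 + (Complex.I - 1) • H := by rw [hE, hc1]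
  have hC2 : expGate H (-Real.pi) = 1 + (-2 : ℂ) • H := by
    rw [hE, hc2]; norm_num
  have hC3 : expGate H (-(Real.pi / 2)) = 1 + (-Complex.I - 1) • H := by rw [hE, hc3]
  have hC4 : expGate H Real.pi = 1 + (-2 : ℂ) • H := by
    rw [hE, hc4]; norm_num
  constructor
  · rw [hγ]
    norm_num [expGate_zero]
    rw [expGate_add, expGate_add, expGate_add]
    norm_num [expGate_zero]
  · -- rewrite γ in the explicit form
    have hγ' : γ = fun t =>
        (1 + (Complex.exp (Complex.I * ((t * y / 2 : ℝ) : ℂ)) - 1) • P) *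
          expGate H (Real.pi / 2) *
        (1 + (Complex.exp (Complex.I * ((-(t * x / 2) : ℝ) : ℂ)) - 1) • P) *
          expGate H (-Real.pi) *
        (1 + (Complex.exp (Complex.I * ((t * x / 2 : ℝ) : ℂ)) - 1) • P) *
          expGate H (-(Real.pi / 2)) *
        (1 + (Complex.exp (Complex.I * ((-(t * y / 2) : ℝ) : ℂ)) - 1) • P) *
          expGate H Real.pi * U := by
      rw [hγ]; funext t; rw [hG, hG, hG, hG]
    -- derivatives of the four moving factors
    have hgen : ∀ (u : ℝ → ℝ) (u' : ℝ), HasDerivAt u u' 0 → u 0 = 0 →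
        HasDerivAt (fun t : ℝ =>
          (1 : Matrix (Fin N) (Fin N) ℂ) +
            (Complex.exp (Complex.I * ((u t : ℝ) : ℂ)) - 1) • P)
          ((Complex.I * (u' : ℂ)) • P) 0 := by
      intro u u' hu hu0
      have h1 : HasDerivAt (fun t : ℝ => ((u t : ℝ) : ℂ)) (u' : ℂ) 0 := hu.ofReal_comp
      have h2 := (h1.const_mul Complex.I).cexp
      rw [hu0] at h2
      simp only [Complex.ofReal_zero, mul_zero, Complex.exp_zero, one_mul] at h2
      exact ((h2.sub_const 1).smul_const P).const_add 1
    have hg1 : HasDerivAt (fun t : ℝ =>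
        (1 : Matrix (Fin N) (Fin N) ℂ) +
          (Complex.exp (Complex.I * ((t * y / 2 : ℝ) : ℂ)) - 1) • P)
        ((Complex.I * ((y : ℂ) / 2)) • P) 0 := by
      have := hgen (fun t => t * y / 2) (y / 2)
        (by simpa using ((hasDerivAt_id (0 : ℝ)).mul_const y).div_const 2) (by norm_num)
      simpa using this
    have hg3 : HasDerivAt (fun t : ℝ =>
        (1 : Matrix (Fin N) (Fin N) ℂ) +
          (Complex.exp (Complex.I * ((-(t * x / 2) : ℝ) : ℂ)) - 1) • P)
        ((Complex.I * (-((x : ℂ) / 2))) • P) 0 := by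
      have := hgen (fun t => -(t * x / 2)) (-(x / 2))
        (by simpa [Pi.neg_def] using (((hasDerivAt_id (0 : ℝ)).mul_const x).div_const 2).neg) (by norm_num)
      simpa using this
    have hg5 : HasDerivAt (fun t : ℝ =>
        (1 : Matrix (Fin N) (Fin N) ℂ) +
          (Complex.exp (Complex.I * ((t * x / 2 : ℝ) : ℂ)) - 1) • P)
        ((Complex.I * ((x : ℂ) / 2)) • P) 0 := by
      have := hgen (fun t => t * x / 2) (x / 2)
        (by simpa using ((hasDerivAt_id (0 : ℝ)).mul_const x).div_const 2) (by norm_num)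
      simpa using this
    have hg7 : HasDerivAt (fun t : ℝ =>
        (1 : Matrix (Fin N) (Fin N) ℂ) +
          (Complex.exp (Complex.I * ((-(t * y / 2) : ℝ) : ℂ)) - 1) • P)
        ((Complex.I * (-((y : ℂ) / 2))) • P) 0 := by
      have := hgen (fun t => -(t * y / 2)) (-(y / 2))
        (by simpa [Pi.neg_def] using (((hasDerivAt_id (0 : ℝ)).mul_const y).div_const 2).neg) (by norm_num)
      simpa using this
    have hd := ((((((hg1.mul_const (expGate H (Real.pi / 2))).mul hg3).mul_const
        (expGate H (-Real.pi))).mul hg5).mul_const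
        (expGate H (-(Real.pi / 2)))).mul hg7).mul_const (expGate H Real.pi) |>.mul_const U
    rw [hγ']
    convert hd.hasDerivWithinAt using 1
    rfl
    rfl
    rfl
    rfl
    -- now prove the algebraic identity
    simp only [Pi.mul_apply, zero_mul, zero_div, neg_zero, Complex.ofReal_zero, mul_zero, Complex.exp_zero,
      sub_self, zero_smul, add_zero, one_mul, mul_one]
    rw [hC1, hC2, hC3, hC4, hY₀, hX₀]
    have hHH : ∀ A : Matrix (Fin N) (Fin N) ℂ, H * (H * A) = H * A := by
      intro A; rw [← mul_assoc, hProj]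
    simp only [mul_add, add_mul, smul_mul_assoc, mul_smul_comm, smul_smul, smul_add, smul_sub,
      mul_sub, sub_mul, mul_one, one_mul, mul_assoc, hHH]
    have h2 : (Complex.I)^2 = -1 := Complex.I_sq
    have h3 : (Complex.I)^3 = -Complex.I := by rw [pow_succ, h2]; ring
    have h4 : (Complex.I)^4 = 1 := by rw [pow_succ, h3]; simp [Complex.I_mul_I]
    match_scalars
    all_goals (ring_nf; try simp only [h2, h3, h4]; try ring_nf)
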